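/- Let 𝓗 = (H, ≼) be a premonoid, let x ∈ H, and let 𝓚 = (K, ≼_K) be a subpremonoid of 𝓗 such that K contains every ∣_H-divisor of x. Then Z_𝓗(x) = Z_𝓚(x) and Z^m_𝓗(x) = Z^m_𝓚(x); the analogous equalities hold for atomic and minimal atomic ≼-factorizations; and consequently the set of lengths, the set of minimal lengths, the set of atomic lengths, and the set of minimal atomic lengths of x computed in 𝓗 coincide with those computed in 𝓚. -/

import Mathlib

open Pointwise

namespace FactPaper

/-- `u` is a `≼`-unit for the preorder-like relation `r` on a monoid. -/
def RUnit {M : Type*} [Monoid M] (r : M → M → Prop) (u : M) : Prop :=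
  r u 1 ∧ r 1 u

/-- `u` is a `≼`-non-unit. -/
def RNonUnit {M : Type*} [Monoid M] (r : M → M → Prop) (u : M) : Prop :=
  ¬ RUnit r u

/-- The strict part `≺` of the relation `r`. -/
def RLt {M : Type*} (r : M → M → Prop) (x y : M) : Prop :=
  r x y ∧ ¬ r y x

/-- `a` is a `≼`-irreducible. -/
def RIrred {M : Type*} [Monoid M] (r : M → M → Prop) (a : M) : Prop :=
  RNonUnit r a ∧
    ∀ y z : M, RNonUnit r y → RNonUnit r z → RLt r y a → RLt r z a → a ≠ y * z

/-- `a` is a `≼`-atom. -/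
def RAtom {M : Type*} [Monoid M] (r : M → M → Prop) (a : M) : Prop :=
  RNonUnit r a ∧ ∀ y z : M, RNonUnit r y → RNonUnit r z → a ≠ y * z

/-- `a` is a `≼`-quark. -/
def RQuark {M : Type*} [Monoid M] (r : M → M → Prop) (a : M) : Prop :=
  RNonUnit r a ∧ ¬ ∃ b : M, RNonUnit r b ∧ RLt r b a

/-- The divisibility preorder: `Dvd2 x y` iff `y ∈ M x M`. -/
def Dvd2 {M : Type*} [Monoid M] (x y : M) : Prop :=
  ∃ u v : M, y = u * x * v

/-- The restriction of a relation on `M` to a submonoid `K`. -/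
def SubRel {M : Type*} [Monoid M] (r : M → M → Prop) (K : Submonoid M) (a b : K) : Prop :=
  r (a : M) (b : M)

/-- The preorder `⊑` on words induced by `r`: an injection of indices matching
`r`-equivalent letters. -/
def WordLe {M : Type*} (r : M → M → Prop) (l m : List M) : Prop :=
  ∃ σ : Fin l.length ↪ Fin m.length,
    ∀ i : Fin l.length, r (l.get i) (m.get (σ i)) ∧ r (m.get (σ i)) (l.get i)

/-- `⊑`-equivalence of words. -/
def WordEquiv {M : Type*} (r : M → M → Prop) (l m : List M) : Prop :=
  WordLe r l m ∧ WordLe r m l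

/-- `l` is a `≼`-factorization of `x`: a word of `≼`-irreducibles with product `x`. -/
def IsFac {M : Type*} [Monoid M] (r : M → M → Prop) (x : M) (l : List M) : Prop :=
  (∀ a ∈ l, RIrred r a) ∧ l.prod = x

/-- `l` is a minimal `≼`-factorization of `x`: a `⊑`-minimal `≼`-factorization. -/
def IsMinFac {M : Type*} [Monoid M] (r : M → M → Prop) (x : M) (l : List M) : Prop :=
  IsFac r x l ∧ ∀ m : List M, IsFac r x m → WordLe r m l → WordLe r l m

/-- `l` is an atomic `≼`-factorization of `x`. -/
def IsAtomicFac {M : Type*} [Monoid M] (r : M → M → Prop) (x : M) (l : List M) : Prop :=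
  (∀ a ∈ l, RAtom r a) ∧ l.prod = x

/-- `l` is a minimal atomic `≼`-factorization of `x`. -/
def IsMinAtomicFac {M : Type*} [Monoid M] (r : M → M → Prop) (x : M) (l : List M) : Prop :=
  IsMinFac r x l ∧ ∀ a ∈ l, RAtom r a

/-- Every `≼`-non-unit is a non-empty product of `≼`-irreducibles. -/
def Factorable {M : Type*} [Monoid M] (r : M → M → Prop) : Prop :=
  ∀ x : M, RNonUnit r x →
    ∃ l : List M, l ≠ [] ∧ (∀ a ∈ l, RIrred r a) ∧ l.prod = x

/-- Every `≼`-non-unit is a non-empty product of `≼`-atoms. -/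
def Atomic {M : Type*} [Monoid M] (r : M → M → Prop) : Prop :=
  ∀ x : M, RNonUnit r x →
    ∃ l : List M, l ≠ [] ∧ (∀ a ∈ l, RAtom r a) ∧ l.prod = x

/-- The premonoid `(M, r)` is finitely generated up to units. -/
def IsFGU {M : Type*} [Monoid M] (r : M → M → Prop) : Prop :=
  ∃ A : Set M, A.Finite ∧
    Submonoid.closure
      {w : M | ∃ u a v : M, RUnit r u ∧ a ∈ A ∧ RUnit r v ∧ w = u * a * v} = ⊤

/-- The submonoid generated by the `∣_M`-divisors of `x` (ground monoid of the germ of a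
premonoid at `x`). -/
def GermSub {M : Type*} [Monoid M] (x : M) : Submonoid M :=
  Submonoid.closure {y : M | Dvd2 y x}

/-- Membership in the smallest divisor-closed submonoid containing `x`. -/
inductive InDC {M : Type*} [Monoid M] (x : M) : M → Prop
  | base : InDC x x
  | one : InDC x 1
  | mul {a b : M} : InDC x a → InDC x b → InDC x (a * b)
  | dvd {a b : M} : InDC x b → Dvd2 a b → InDC x a

/-- The smallest divisor-closed submonoid of `M` containing `x`. -/
def DCSub {M : Type*} [Monoid M] (x : M) : Submonoid M where
  carrier := {y : M | InDC x y}
  mul_mem' := fun ha hb => InDC.mul ha hb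
  one_mem' := InDC.one

/-- `(M, r)` is a weakly positive monoid. -/
def WeaklyPositive {M : Type*} [Monoid M] (r : M → M → Prop) : Prop :=
  (∀ x u v : M, RUnit r u → RUnit r v → r (u * x * v) x) ∧
    (∀ x a b : M, r x (a * x * b))

/-- `(M, r)` is locally of finite type (loft). -/
def IsLoft {M : Type*} [Monoid M] (r : M → M → Prop) : Prop :=
  ∀ x : M, RNonUnit r x →
    ∃ A : Set M, A.Finite ∧ A ⊆ {a : M | RIrred r a} ∧
      ∀ l : List M, IsFac r x l →
        ∃ m : List M, (∀ a ∈ m, a ∈ A) ∧ WordEquiv r l m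

/-- `(M, r)` is BF-factorable. -/
def IsBFFactorable {M : Type*} [Monoid M] (r : M → M → Prop) : Prop :=
  ∀ x : M, RNonUnit r x →
    {n : ℕ | ∃ l : List M, IsFac r x l ∧ l.length = n}.Finite ∧
      {n : ℕ | ∃ l : List M, IsFac r x l ∧ l.length = n}.Nonempty

/-- `(M, r)` is BmF-factorable. -/
def IsBmFFactorable {M : Type*} [Monoid M] (r : M → M → Prop) : Prop :=
  ∀ x : M, RNonUnit r x →
    {n : ℕ | ∃ l : List M, IsMinFac r x l ∧ l.length = n}.Finite ∧
      {n : ℕ | ∃ l : List M, IsMinFac r x l ∧ l.length = n}.Nonempty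

/-- `(M, r)` is FF-factorable: modulo `⊑`-equivalence, every `≼`-non-unit has finitely
many (and at least one) `≼`-factorizations. -/
def IsFFFactorable {M : Type*} [Monoid M] (r : M → M → Prop) : Prop :=
  ∀ x : M, RNonUnit r x →
    (∃ l : List M, IsFac r x l) ∧
      ∃ F : Set (List M), F.Finite ∧
        ∀ l : List M, IsFac r x l → ∃ m ∈ F, IsFac r x m ∧ WordEquiv r l m

/-- `(M, r)` is FmF-factorable. -/
def IsFmFFactorable {M : Type*} [Monoid M] (r : M → M → Prop) : Prop :=
  ∀ x : M, RNonUnit r x →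
    (∃ l : List M, IsMinFac r x l) ∧
      ∃ F : Set (List M), F.Finite ∧
        ∀ l : List M, IsMinFac r x l → ∃ m ∈ F, IsMinFac r x m ∧ WordEquiv r l m

/-- `(M, r)` is FF-atomic. -/
def IsFFAtomic {M : Type*} [Monoid M] (r : M → M → Prop) : Prop :=
  ∀ x : M, RNonUnit r x →
    (∃ l : List M, IsAtomicFac r x l) ∧
      ∃ F : Set (List M), F.Finite ∧
        ∀ l : List M, IsAtomicFac r x l → ∃ m ∈ F, IsAtomicFac r x m ∧ WordEquiv r l m

/-- `(M, r)` is FmF-atomic. -/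
def IsFmFAtomic {M : Type*} [Monoid M] (r : M → M → Prop) : Prop :=
  ∀ x : M, RNonUnit r x →
    (∃ l : List M, IsMinAtomicFac r x l) ∧
      ∃ F : Set (List M), F.Finite ∧
        ∀ l : List M, IsMinAtomicFac r x l → ∃ m ∈ F, IsMinAtomicFac r x m ∧ WordEquiv r l m


section Helpers
variable {H : Type*} [Monoid H] {r : H → H → Prop} {K : Submonoid H}

lemma dvd2_trans {a b c : H} (h1 : Dvd2 a b) (h2 : Dvd2 b c) : Dvd2 a c := by
  obtain ⟨u, v, rfl⟩ := h1
  obtain ⟨s, t, rfl⟩ := h2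
  exact ⟨s * u, v * t, by simp [mul_assoc]⟩

lemma dvd2_of_mem {l : List H} {a : H} (ha : a ∈ l) : Dvd2 a l.prod := by
  obtain ⟨p, q, rfl⟩ := List.append_of_mem ha
  exact ⟨p.prod, q.prod, by simp [List.prod_append, mul_assoc]⟩

lemma lift_list (l : List H) (h : ∀ a ∈ l, a ∈ K) :
    ∃ l' : List K, l'.map Subtype.val = l :=
  ⟨l.pmap (fun a ha => (⟨a, ha⟩ : K)) h, by simp [List.map_pmap]⟩

lemma runit_iff {a : K} : RUnit (SubRel r K) a ↔ RUnit r (a : H) := Iff.rfl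

lemma rnonunit_iff {a : K} : RNonUnit (SubRel r K) a ↔ RNonUnit r (a : H) := Iff.rfl

lemma rlt_iff {a b : K} : RLt (SubRel r K) a b ↔ RLt r (a : H) (b : H) := Iff.rfl

lemma rirred_iff {a : K} (hdiv : ∀ y : H, Dvd2 y (a : H) → y ∈ K) :
    RIrred (SubRel r K) a ↔ RIrred r (a : H) := by
  constructor
  · rintro ⟨h1, h2⟩
    refine ⟨h1, fun y z hy hz hya hza hne => ?_⟩
    have hyK : y ∈ K := hdiv y ⟨1, z, by simp [hne]⟩
    have hzK : z ∈ K := hdiv z ⟨y, 1, by simp [hne]⟩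
    exact h2 ⟨y, hyK⟩ ⟨z, hzK⟩ hy hz hya hza (Subtype.ext hne)
  · rintro ⟨h1, h2⟩
    refine ⟨h1, fun y z hy hz hya hza hne => ?_⟩
    exact h2 y z hy hz hya hza (congrArg Subtype.val hne)

lemma ratom_iff {a : K} (hdiv : ∀ y : H, Dvd2 y (a : H) → y ∈ K) :
    RAtom (SubRel r K) a ↔ RAtom r (a : H) := by
  constructor
  · rintro ⟨h1, h2⟩
    refine ⟨h1, fun y z hy hz hne => ?_⟩
    have hyK : y ∈ K := hdiv y ⟨1, z, by simp [hne]⟩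
    have hzK : z ∈ K := hdiv z ⟨y, 1, by simp [hne]⟩
    exact h2 ⟨y, hyK⟩ ⟨z, hzK⟩ hy hz (Subtype.ext hne)
  · rintro ⟨h1, h2⟩
    exact ⟨h1, fun y z hy hz hne => h2 y z hy hz (congrArg Subtype.val hne)⟩

lemma wordle_iff {l m : List K} :
    WordLe (SubRel r K) l m ↔ WordLe r (l.map Subtype.val) (m.map Subtype.val) := by
  constructor
  · rintro ⟨σ, hσ⟩
    refine ⟨((finCongr (l.length_map _)).toEmbedding.trans σ).trans
      (finCongr (m.length_map _).symm).toEmbedding, fun i => ?_⟩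
    simpa [SubRel, List.unattach, List.getElem_map, -List.map_subtype] using hσ (finCongr (l.length_map _) i)
  · rintro ⟨σ, hσ⟩
    refine ⟨((finCongr (l.length_map _).symm).toEmbedding.trans σ).trans
      (finCongr (m.length_map _)).toEmbedding, fun i => ?_⟩
    simpa [SubRel, List.unattach, List.getElem_map, -List.map_subtype] using hσ (finCongr (l.length_map _).symm i)

end Helpers
section Helpers2
variable {H : Type*} [Monoid H] {r : H → H → Prop} {K : Submonoid H} {x : H}

lemma coe_prod (l : List K) : ((l.prod : K) : H) = (l.map Subtype.val).prod := by
  simpa using map_list_prod K.subtype l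

lemma isfac_iff (hx : x ∈ K) (hK : ∀ y : H, Dvd2 y x → y ∈ K) (l : List K) :
    IsFac (SubRel r K) ⟨x, hx⟩ l ↔ IsFac r x (l.map Subtype.val) := by
  constructor
  · rintro ⟨hi, hp⟩
    have hpH : (l.map Subtype.val).prod = x := by
      rw [← coe_prod, hp]
    refine ⟨fun a ha => ?_, hpH⟩
    obtain ⟨b, hb, rfl⟩ := List.mem_map.1 ha
    exact (rirred_iff (fun y hy => hK y (dvd2_trans hy (hpH ▸ dvd2_of_mem ha)))).1 (hi b hb)
  · rintro ⟨hi, hp⟩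
    refine ⟨fun a ha => ?_, Subtype.ext (by rw [coe_prod, hp])⟩
    have ha' : (a : H) ∈ l.map Subtype.val := List.mem_map_of_mem ha
    exact (rirred_iff (fun y hy => hK y (dvd2_trans hy (hp ▸ dvd2_of_mem ha')))).2
      (hi _ ha')

lemma isatomicfac_iff (hx : x ∈ K) (hK : ∀ y : H, Dvd2 y x → y ∈ K) (l : List K) :
    IsAtomicFac (SubRel r K) ⟨x, hx⟩ l ↔ IsAtomicFac r x (l.map Subtype.val) := by
  constructor
  · rintro ⟨hi, hp⟩
    have hpH : (l.map Subtype.val).prod = x := by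
      rw [← coe_prod, hp]
    refine ⟨fun a ha => ?_, hpH⟩
    obtain ⟨b, hb, rfl⟩ := List.mem_map.1 ha
    exact (ratom_iff (fun y hy => hK y (dvd2_trans hy (hpH ▸ dvd2_of_mem ha)))).1 (hi b hb)
  · rintro ⟨hi, hp⟩
    refine ⟨fun a ha => ?_, Subtype.ext (by rw [coe_prod, hp])⟩
    have ha' : (a : H) ∈ l.map Subtype.val := List.mem_map_of_mem ha
    exact (ratom_iff (fun y hy => hK y (dvd2_trans hy (hp ▸ dvd2_of_mem ha')))).2 (hi _ ha')

lemma isfac_lift (hK : ∀ y : H, Dvd2 y x → y ∈ K) {l : List H} (h : IsFac r x l) :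
    ∃ l' : List K, l'.map Subtype.val = l :=
  lift_list l (fun a ha => hK a (h.2 ▸ dvd2_of_mem ha))

lemma isatomicfac_lift (hK : ∀ y : H, Dvd2 y x → y ∈ K) {l : List H}
    (h : IsAtomicFac r x l) : ∃ l' : List K, l'.map Subtype.val = l :=
  lift_list l (fun a ha => hK a (h.2 ▸ dvd2_of_mem ha))

lemma isminfac_iff (hx : x ∈ K) (hK : ∀ y : H, Dvd2 y x → y ∈ K) (l : List K) :
    IsMinFac (SubRel r K) ⟨x, hx⟩ l ↔ IsMinFac r x (l.map Subtype.val) := by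
  constructor
  · rintro ⟨hf, hmin⟩
    refine ⟨(isfac_iff hx hK l).1 hf, fun m hm hml => ?_⟩
    obtain ⟨m', rfl⟩ := isfac_lift hK hm
    exact wordle_iff.1 (hmin m' ((isfac_iff hx hK m').2 hm) (wordle_iff.2 hml))
  · rintro ⟨hf, hmin⟩
    refine ⟨(isfac_iff hx hK l).2 hf, fun m hm hml => ?_⟩
    exact wordle_iff.2 (hmin (m.map Subtype.val) ((isfac_iff hx hK m).1 hm)
      (wordle_iff.1 hml))

lemma isminatomicfac_iff (hx : x ∈ K) (hK : ∀ y : H, Dvd2 y x → y ∈ K) (l : List K) :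
    IsMinAtomicFac (SubRel r K) ⟨x, hx⟩ l ↔ IsMinAtomicFac r x (l.map Subtype.val) := by
  constructor
  · rintro ⟨hf, hat⟩
    have hpH : (l.map Subtype.val).prod = x := ((isminfac_iff hx hK l).1 hf).1.2
    refine ⟨(isminfac_iff hx hK l).1 hf, fun a ha => ?_⟩
    obtain ⟨b, hb, rfl⟩ := List.mem_map.1 ha
    exact (ratom_iff (fun y hy => hK y (dvd2_trans hy (hpH ▸ dvd2_of_mem ha)))).1 (hat b hb)
  · rintro ⟨hf, hat⟩
    refine ⟨(isminfac_iff hx hK l).2 hf, fun a ha => ?_⟩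
    have ha' : (a : H) ∈ l.map Subtype.val := List.mem_map_of_mem ha
    exact (ratom_iff (fun y hy => hK y (dvd2_trans hy (hf.1.2 ▸ dvd2_of_mem ha')))).2
      (hat _ ha')

end Helpers2
/-- Proposition 3.6(ii)–(v). If `K` is a submonoid of `H` containing
every `∣_H`-divisor of `x`, then the (minimal, atomic, minimal atomic) `≼`-factorizations
of `x` in `H` correspond exactly (under the inclusion `K → H` on letters) to those in
`K`, and the corresponding sets of lengths coincide. -/
theorem stmt2 {H : Type*} [Monoid H] (r : H → H → Prop)
    (hrefl : Reflexive r) (htrans : Transitive r)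
    (x : H) (K : Submonoid H) (hx : x ∈ K) (hK : ∀ y : H, Dvd2 y x → y ∈ K) :
    (∀ l : List K, IsFac (SubRel r K) ⟨x, hx⟩ l ↔ IsFac r x (l.map Subtype.val)) ∧
    (∀ l : List H, IsFac r x l → ∃ l' : List K, l'.map Subtype.val = l) ∧
    (∀ l : List K, IsMinFac (SubRel r K) ⟨x, hx⟩ l ↔ IsMinFac r x (l.map Subtype.val)) ∧
    (∀ l : List H, IsMinFac r x l → ∃ l' : List K, l'.map Subtype.val = l) ∧
    (∀ l : List K,
      IsAtomicFac (SubRel r K) ⟨x, hx⟩ l ↔ IsAtomicFac r x (l.map Subtype.val)) ∧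
    (∀ l : List H, IsAtomicFac r x l → ∃ l' : List K, l'.map Subtype.val = l) ∧
    (∀ l : List K,
      IsMinAtomicFac (SubRel r K) ⟨x, hx⟩ l ↔ IsMinAtomicFac r x (l.map Subtype.val)) ∧
    (∀ l : List H, IsMinAtomicFac r x l → ∃ l' : List K, l'.map Subtype.val = l) ∧
    ({n : ℕ | ∃ l : List H, IsFac r x l ∧ l.length = n} =
      {n : ℕ | ∃ l : List K, IsFac (SubRel r K) ⟨x, hx⟩ l ∧ l.length = n}) ∧
    ({n : ℕ | ∃ l : List H, IsMinFac r x l ∧ l.length = n} =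
      {n : ℕ | ∃ l : List K, IsMinFac (SubRel r K) ⟨x, hx⟩ l ∧ l.length = n}) ∧
    ({n : ℕ | ∃ l : List H, IsAtomicFac r x l ∧ l.length = n} =
      {n : ℕ | ∃ l : List K, IsAtomicFac (SubRel r K) ⟨x, hx⟩ l ∧ l.length = n}) ∧
    ({n : ℕ | ∃ l : List H, IsMinAtomicFac r x l ∧ l.length = n} =
      {n : ℕ | ∃ l : List K, IsMinAtomicFac (SubRel r K) ⟨x, hx⟩ l ∧ l.length = n}) := by

  refine ⟨isfac_iff hx hK, fun l hl => isfac_lift hK hl,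
    isminfac_iff hx hK, fun l hl => isfac_lift hK hl.1,
    isatomicfac_iff hx hK, fun l hl => isatomicfac_lift hK hl,
    isminatomicfac_iff hx hK, fun l hl => isfac_lift hK hl.1.1, ?_, ?_, ?_, ?_⟩
  · ext n
    simp only [Set.mem_setOf_eq]
    constructor
    · rintro ⟨l, hl, rfl⟩
      obtain ⟨l', rfl⟩ := isfac_lift hK hl
      exact ⟨l', (isfac_iff hx hK l').2 hl, by simp⟩
    · rintro ⟨l, hl, rfl⟩
      exact ⟨l.map Subtype.val, (isfac_iff hx hK l).1 hl, by simp⟩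
  · ext n
    simp only [Set.mem_setOf_eq]
    constructor
    · rintro ⟨l, hl, rfl⟩
      obtain ⟨l', rfl⟩ := isfac_lift hK hl.1
      exact ⟨l', (isminfac_iff hx hK l').2 hl, by simp⟩
    · rintro ⟨l, hl, rfl⟩
      exact ⟨l.map Subtype.val, (isminfac_iff hx hK l).1 hl, by simp⟩
  · ext n
    simp only [Set.mem_setOf_eq]
    constructor
    · rintro ⟨l, hl, rfl⟩
      obtain ⟨l', rfl⟩ := isatomicfac_lift hK hl
      exact ⟨l', (isatomicfac_iff hx hK l').2 hl, by simp⟩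
    · rintro ⟨l, hl, rfl⟩
      exact ⟨l.map Subtype.val, (isatomicfac_iff hx hK l).1 hl, by simp⟩
  · ext n
    simp only [Set.mem_setOf_eq]
    constructor
    · rintro ⟨l, hl, rfl⟩
      obtain ⟨l', rfl⟩ := isfac_lift hK hl.1.1
      exact ⟨l', (isminatomicfac_iff hx hK l').2 hl, by simp⟩
    · rintro ⟨l, hl, rfl⟩
      exact ⟨l.map Subtype.val, (isminatomicfac_iff hx hK l).1 hl, by simp⟩

end FactPaper
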